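/- With D(2;2k+1) = (2!·3!···(2k)!)·((2k)!/(2k-3)!)·(6k-1)!·2^{4k-1} and D(k) = (2!·3!···(2k-4)!)·(2k-4)!·3²·(6k-1)!·2^{4k+3} for k ≥ 4 (and D(k) = (6k-1)!·2^{6k-1} for 1 ≤ k ≤ 3): for all integers k₁ ≥ 2 and k ≥ 4, D(2;2k₁+1)·D(k) divides D(k+k₁). -/

import Mathlib

/-- The product of factorials `2!·3!···m!` (equal to `1` for `m < 2`). -/
def facProd (m : ℕ) : ℕ := ∏ i ∈ Finset.Icc 2 m, Nat.factorial i

/-- `D(k)`: `(6k-1)!·2^{6k-1}` for `k ≤ 3`, and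
`(2!·3!···(2k-4)!)·(2k-4)!·3²·(6k-1)!·2^{4k+3}` for `k ≥ 4`. -/
def D (k : ℕ) : ℕ :=
  if k ≤ 3 then Nat.factorial (6 * k - 1) * 2 ^ (6 * k - 1)
  else facProd (2 * k - 4) * Nat.factorial (2 * k - 4) * 3 ^ 2 *
    Nat.factorial (6 * k - 1) * 2 ^ (4 * k + 3)

/-- The two-leg denominator bound `D(2;2k+1) = (2!···(2k)!)·((2k)(2k-1)(2k-2))·(6k-1)!·2^{4k-1}`. -/
def D2 (k : ℕ) : ℕ :=
  facProd (2 * k) * Nat.descFactorial (2 * k) 3 * Nat.factorial (6 * k - 1) * 2 ^ (4 * k - 1)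

lemma facProd_eq_Ioc (m : ℕ) : facProd m = ∏ i ∈ Finset.Ioc 1 m, Nat.factorial i := by
  rw [facProd, ← Finset.Icc_add_one_left_eq_Ioc]
  rfl

lemma facProd_mul_facProd_dvd (a b : ℕ) :
    facProd (2 * a + 4) * facProd (2 * b + 4) ∣ facProd (2 * a + 2 * b + 8) := by
  simp only [facProd_eq_Ioc]
  rw [← Finset.prod_Ioc_consecutive (fun i => Nat.factorial i) (show 1 ≤ 2 * a + 4 by omega)
    (show 2 * a + 4 ≤ 2 * a + 2 * b + 8 by omega)]
  refine mul_dvd_mul_left _ ?_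
  calc ∏ i ∈ Finset.Ioc 1 (2 * b + 4), Nat.factorial i
      ∣ ∏ i ∈ Finset.Ioc 1 (2 * b + 4), Nat.factorial (i + (2 * a + 3)) :=
        Finset.prod_dvd_prod_of_dvd _ _ fun i _ =>
          Nat.factorial_dvd_factorial (Nat.le_add_right _ _)
    _ = ∏ i ∈ Finset.Ioc (1 + (2 * a + 3)) (2 * b + 4 + (2 * a + 3)), Nat.factorial i := by
        rw [← Finset.map_add_right_Ioc, Finset.prod_map]
        rfl
    _ = ∏ i ∈ Finset.Ioc (2 * a + 4) (2 * b + 4 + (2 * a + 3)), Nat.factorial i := by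
        rw [show 1 + (2 * a + 3) = 2 * a + 4 from by omega]
    _ ∣ ∏ i ∈ Finset.Ioc (2 * a + 4) (2 * a + 2 * b + 8), Nat.factorial i :=
        Finset.prod_dvd_prod_of_subset _ _ _ (Finset.Ioc_subset_Ioc le_rfl (by omega))

/-- For `k₁ ≥ 2` and `k ≥ 4`, `D(2;2k₁+1)·D(k)` divides `D(k+k₁)`. -/
theorem D2_mul_D_dvd (k₁ k : ℕ) (h₁ : 2 ≤ k₁) (hk : 4 ≤ k) :
    D2 k₁ * D k ∣ D (k + k₁) := by
  obtain ⟨a, rfl⟩ : ∃ a, k = a + 4 := ⟨k - 4, by omega⟩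
  obtain ⟨b, rfl⟩ : ∃ b, k₁ = b + 2 := ⟨k₁ - 2, by omega⟩
  simp only [D2, D]
  rw [if_neg (by omega), if_neg (by omega)]
  have e1 : 2 * (b + 2) = 2 * b + 4 := by omega
  have e2 : 6 * (b + 2) - 1 = 6 * b + 11 := by omega
  have e3 : 4 * (b + 2) - 1 = 4 * b + 7 := by omega
  have e4 : 2 * (a + 4) - 4 = 2 * a + 4 := by omega
  have e5 : 6 * (a + 4) - 1 = 6 * a + 23 := by omega
  have e6 : 4 * (a + 4) + 3 = 4 * a + 19 := by omega
  have e7 : 2 * (a + 4 + (b + 2)) - 4 = 2 * a + 2 * b + 8 := by omega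
  have e8 : 6 * (a + 4 + (b + 2)) - 1 = 6 * a + 6 * b + 35 := by omega
  have e9 : 4 * (a + 4 + (b + 2)) + 3 = 4 * a + 4 * b + 27 := by omega
  rw [e1, e2, e3, e4, e5, e6, e7, e8, e9]
  have h1 : facProd (2 * a + 4) * facProd (2 * b + 4) ∣ facProd (2 * a + 2 * b + 8) :=
    facProd_mul_facProd_dvd a b
  have hdesc : Nat.descFactorial (2 * b + 4) 3 ∣ Nat.factorial (2 * b + 4) :=
    Dvd.intro_left _ (Nat.factorial_mul_descFactorial (by omega))
  have h2 : Nat.descFactorial (2 * b + 4) 3 * Nat.factorial (2 * a + 4) ∣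
      Nat.factorial (2 * a + 2 * b + 8) := by
    calc Nat.descFactorial (2 * b + 4) 3 * Nat.factorial (2 * a + 4)
        ∣ Nat.factorial (2 * b + 4) * Nat.factorial (2 * a + 4) :=
          mul_dvd_mul_right hdesc _
      _ ∣ Nat.factorial (2 * b + 4 + (2 * a + 4)) :=
          Nat.factorial_mul_factorial_dvd_factorial_add _ _
      _ ∣ Nat.factorial (2 * a + 2 * b + 8) :=
          Nat.factorial_dvd_factorial (by omega)
  have h3 : Nat.factorial (6 * b + 11) * Nat.factorial (6 * a + 23) ∣
      Nat.factorial (6 * a + 6 * b + 35) :=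
    (Nat.factorial_mul_factorial_dvd_factorial_add _ _).trans
      (Nat.factorial_dvd_factorial (by omega))
  have h4 : (2 : ℕ) ^ (4 * b + 7) * 2 ^ (4 * a + 19) ∣ 2 ^ (4 * a + 4 * b + 27) :=
    ⟨2, by ring⟩
  have key := mul_dvd_mul (mul_dvd_mul (mul_dvd_mul (mul_dvd_mul h1 h2)
    (dvd_refl ((3 : ℕ) ^ 2))) h3) h4
  calc facProd (2 * b + 4) * Nat.descFactorial (2 * b + 4) 3 * Nat.factorial (6 * b + 11) *
        2 ^ (4 * b + 7) *
        (facProd (2 * a + 4) * Nat.factorial (2 * a + 4) * 3 ^ 2 * Nat.factorial (6 * a + 23) *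
          2 ^ (4 * a + 19))
      = facProd (2 * a + 4) * facProd (2 * b + 4) *
        (Nat.descFactorial (2 * b + 4) 3 * Nat.factorial (2 * a + 4)) * 3 ^ 2 *
        (Nat.factorial (6 * b + 11) * Nat.factorial (6 * a + 23)) *
        (2 ^ (4 * b + 7) * 2 ^ (4 * a + 19)) := by ring
    _ ∣ facProd (2 * a + 2 * b + 8) * Nat.factorial (2 * a + 2 * b + 8) * 3 ^ 2 *
        Nat.factorial (6 * a + 6 * b + 35) * 2 ^ (4 * a + 4 * b + 27) := key
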